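/- Let F be a perfect field and a₁, …, a_m ∈ F. The diagonal quadratic form Σᵢ aᵢXᵢ² is universal over M_2(F) (i.e., for every A ∈ M_2(F) there exist X₁,…,X_m ∈ M_2(F) with Σᵢ aᵢXᵢ² = A) if and only if at least two of a₁, …, a_m are nonzero. -/

import Mathlib

open Matrix

section helpers

variable {F : Type*} [Field F]

lemma char2_sqrt [PerfectField F] (h2 : (2:F) = 0) (u : F) : ∃ v : F, v ^ 2 = u := by
  have hdvd : ringChar F ∣ 2 := ringChar.dvd h2
  have h1 : ringChar F ≠ 1 := CharP.ringChar_ne_one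
  have heq : ringChar F = 2 := by
    have := Nat.le_of_dvd (by norm_num) hdvd
    interval_cases h : ringChar F
    · simp at hdvd
    · exact absurd rfl h1
    · rfl
  haveI : CharP F 2 := heq ▸ ringChar.charP F
  haveI : ExpChar F 2 := ExpChar.prime Nat.prime_two
  exact surjective_frobenius F 2 u

lemma L1 {γ : F} (hγ : γ ≠ 0) (c : F) :
    ∃ X : Matrix (Fin 2) (Fin 2) F, γ • X ^ 2 = c • (1 : Matrix (Fin 2) (Fin 2) F) := by
  refine ⟨!![0, 1; c/γ, 0], ?_⟩
  ext i j
  fin_cases i <;> fin_cases j <;>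
    simp [pow_two, Matrix.mul_apply, Fin.sum_univ_two, Matrix.one_apply] <;>
    field_simp

lemma L2 {γ c : F} (hγ : γ ≠ 0) (hc : c ≠ 0)
    {B : Matrix (Fin 2) (Fin 2) F} (hdet : B 0 0 * B 1 1 = B 0 1 * B 1 0)
    (htr : B 0 0 + B 1 1 = γ * c ^ 2) :
    ∃ X : Matrix (Fin 2) (Fin 2) F, γ • X ^ 2 = B := by
  have hB2 : B * B = (γ * c ^ 2) • B := by
    ext i j
    fin_cases i <;> fin_cases j <;>
      simp [Matrix.mul_apply, Fin.sum_univ_two, ← htr]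
    · linear_combination - hdet
    · ring
    · ring
    · linear_combination - hdet
  refine ⟨(γ * c)⁻¹ • B, ?_⟩
  have h1 : γ * (γ*c)⁻¹ * (γ*c)⁻¹ * (γ*c^2) = 1 := by field_simp
  rw [pow_two, Matrix.smul_mul, Matrix.mul_smul, hB2, smul_smul, smul_smul, smul_smul, h1, one_smul]

lemma Lmain [PerfectField F] {α β : F} (hα : α ≠ 0) (hβ : β ≠ 0)
    (A : Matrix (Fin 2) (Fin 2) F) :
    ∃ X Y : Matrix (Fin 2) (Fin 2) F, α • X ^ 2 + β • Y ^ 2 = A := by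
  set p := A 0 0 with hp'
  set q := A 0 1 with hq'
  set r := A 1 0 with hr'
  set s := A 1 1 with hs'
  have hA : A = !![p, q; r, s] := Matrix.eta_fin_two A
  have hA2 : A * A = (p + s) • A - (p * s - q * r) • 1 := by
    ext i j
    fin_cases i <;> fin_cases j <;>
      simp [Matrix.mul_apply, Fin.sum_univ_two, Matrix.one_apply] <;> ring
  by_cases h2 : (2:F) = 0
  · by_cases ht : p + s = 0
    · by_cases hp : p = 0
      · -- p = 0, s = 0
        have hs0 : s = 0 := by rw [hp, zero_add] at ht; exact ht
        obtain ⟨c, hc⟩ := char2_sqrt h2 α⁻¹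
        have hcne : c ≠ 0 := by
          intro h; rw [h] at hc; exact inv_ne_zero hα (by simpa using hc.symm)
        obtain ⟨c', hc'⟩ := char2_sqrt h2 β⁻¹
        have hc'ne : c' ≠ 0 := by
          intro h; rw [h] at hc'; exact inv_ne_zero hβ (by simpa using hc'.symm)
        have htr1 : (!![(1:F), q; 0, 0] : Matrix (Fin 2) (Fin 2) F) 0 0
            + (!![(1:F), q; 0, 0] : Matrix (Fin 2) (Fin 2) F) 1 1 = α * c ^ 2 := by
          have : α * c ^ 2 = 1 := by rw [hc]; field_simp
          simp [this]
        have htr2 : (!![(1:F), 0; r, 0] : Matrix (Fin 2) (Fin 2) F) 0 0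
            + (!![(1:F), 0; r, 0] : Matrix (Fin 2) (Fin 2) F) 1 1 = β * c' ^ 2 := by
          have : β * c' ^ 2 = 1 := by rw [hc']; field_simp
          simp [this]
        obtain ⟨X, hX⟩ := L2 hα hcne (by simp) htr1
        obtain ⟨Y, hY⟩ := L2 hβ hc'ne (by simp) htr2
        refine ⟨X, Y, ?_⟩
        rw [hX, hY, hA]
        ext i j
        fin_cases i <;> fin_cases j <;> simp [hp, hs0]
        linear_combination h2
      · -- p ≠ 0, s = -p
        obtain ⟨c, hc⟩ := char2_sqrt h2 (p * α⁻¹)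
        have hcne : c ≠ 0 := by
          intro h; rw [h] at hc
          apply hp
          field_simp at hc
          simpa using hc.symm
        obtain ⟨c', hc'⟩ := char2_sqrt h2 (s * β⁻¹)
        have hsne : s ≠ 0 := by
          intro h; apply hp; rw [h] at ht; simpa using ht
        have hc'ne : c' ≠ 0 := by
          intro h; rw [h] at hc'
          apply hsne
          field_simp at hc'
          simpa using hc'.symm
        have htr1 : (!![p, q; 0, 0] : Matrix (Fin 2) (Fin 2) F) 0 0
            + (!![p, q; 0, 0] : Matrix (Fin 2) (Fin 2) F) 1 1 = α * c ^ 2 := by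
          have : α * c ^ 2 = p := by rw [hc]; field_simp
          simp [this]
        have htr2 : (!![(0:F), 0; r, s] : Matrix (Fin 2) (Fin 2) F) 0 0
            + (!![(0:F), 0; r, s] : Matrix (Fin 2) (Fin 2) F) 1 1 = β * c' ^ 2 := by
          have : β * c' ^ 2 = s := by rw [hc']; field_simp
          simp [this]
        obtain ⟨X, hX⟩ := L2 hα hcne (by simp) htr1
        obtain ⟨Y, hY⟩ := L2 hβ hc'ne (by simp) htr2
        refine ⟨X, Y, ?_⟩
        rw [hX, hY, hA]
        ext i j
        fin_cases i <;> fin_cases j <;> simp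
    · -- trace ≠ 0, char 2 : Y = lam • A
      obtain ⟨lam, hlam⟩ := char2_sqrt h2 (β * (p+s))⁻¹
      have hlam1 : lam ^ 2 * (β * (p + s)) = 1 := by
        rw [hlam]; field_simp
      set e : F := β * lam^2 * (p * s - q * r) with he
      obtain ⟨X, hX⟩ := L1 hα e
      refine ⟨X, lam • A, ?_⟩
      have hY : β • (lam • A) ^ 2 = A + (-e) • 1 := by
        ext i j
        fin_cases i <;> fin_cases j <;>
          simp [pow_two, Matrix.mul_apply, Fin.sum_univ_two, Matrix.one_apply, he]
        · linear_combination p * hlam1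
        · linear_combination q * hlam1
        · linear_combination r * hlam1
        · linear_combination s * hlam1
      rw [hX, hY]
      module
  · -- char ≠ 2
    have h2b : (2:F) * β ≠ 0 := mul_ne_zero h2 hβ
    obtain ⟨μ, hμ2⟩ : ∃ μ : F, 2 * β * μ = β - (p + s) :=
      ⟨(β - (p+s))/(2*β), by field_simp⟩
    obtain ⟨e, he2⟩ : ∃ e : F, e * β = β^2 * μ^2 - (p*s - q*r) :=
      ⟨(β^2 * μ^2 - (p*s - q*r))/β, by field_simp⟩
    obtain ⟨X, hX⟩ := L1 hα (-e)
    refine ⟨X, β⁻¹ • A + μ • 1, ?_⟩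
    have expand : (β⁻¹ • A + μ • (1 : Matrix (Fin 2) (Fin 2) F)) ^ 2
        = (β⁻¹ * β⁻¹) • (A * A) + (β⁻¹ * μ + μ * β⁻¹) • A + (μ * μ) • 1 := by
      rw [pow_two]
      simp only [mul_add, add_mul, Matrix.smul_mul, Matrix.mul_smul, one_mul, mul_one, smul_smul]
      module
    rw [hX, expand, hA2]
    match_scalars
    · field_simp
      linear_combination -he2
    · field_simp
      linear_combination hμ2

end helpers

theorem stmt_4 (F : Type*) [Field F] [PerfectField F] (m : ℕ) (a : Fin m → F) :
    (∀ A : Matrix (Fin 2) (Fin 2) F,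
        ∃ X : Fin m → Matrix (Fin 2) (Fin 2) F, ∑ i, a i • (X i) ^ 2 = A) ↔
      ∃ i j : Fin m, i ≠ j ∧ a i ≠ 0 ∧ a j ≠ 0 := by
  constructor
  · intro h
    by_contra hc
    push_neg at hc
    obtain ⟨X, hX⟩ := h !![0, 1; 0, 0]
    by_cases hall : ∀ i, a i = 0
    · have hz : ∑ i, a i • (X i) ^ 2 = 0 := by
        apply Finset.sum_eq_zero
        intro i _
        rw [hall i, zero_smul]
      rw [hz] at hX
      have := congrFun (congrFun hX 0) 1
      simp at this
    · push_neg at hall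
      obtain ⟨i₀, hi₀⟩ := hall
      have hzero : ∀ j, j ≠ i₀ → a j = 0 := by
        intro j hj
        exact hc i₀ j (Ne.symm hj) hi₀
      have hsum : ∑ i, a i • (X i) ^ 2 = a i₀ • (X i₀) ^ 2 := by
        apply Finset.sum_eq_single
        · intro b _ hb
          rw [hzero b hb, zero_smul]
        · intro hb
          exact absurd (Finset.mem_univ i₀) hb
      rw [hsum] at hX
      set Z := X i₀ with hZ
      have e00 := congrFun (congrFun hX 0) 0
      have e01 := congrFun (congrFun hX 0) 1
      have e10 := congrFun (congrFun hX 1) 0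
      have e11 := congrFun (congrFun hX 1) 1
      simp [pow_two, Matrix.mul_apply, Fin.sum_univ_two] at e00 e01 e10 e11
      have e00' := e00.resolve_left hi₀
      have e10' := e10.resolve_left hi₀
      have e11' := e11.resolve_left hi₀
      have hs : a i₀ * Z 0 1 * (Z 0 0 + Z 1 1) = 1 := by linear_combination e01
      have hsne : Z 0 0 + Z 1 1 ≠ 0 := by
        intro h0
        rw [h0, mul_zero] at hs
        exact zero_ne_one hs
      have hz2 : Z 1 0 = 0 := by
        have h' : Z 1 0 * (Z 0 0 + Z 1 1) = 0 := by linear_combination e10'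
        rcases mul_eq_zero.mp h' with h'' | h''
        · exact h''
        · exact absurd h'' hsne
      have hz0 : Z 0 0 = 0 := by
        have h' : Z 0 0 * Z 0 0 = 0 := by linear_combination e00' - Z 0 1 * hz2
        exact mul_self_eq_zero.mp h'
      have hz3 : Z 1 1 = 0 := by
        have h' : Z 1 1 * Z 1 1 = 0 := by linear_combination e11' - Z 0 1 * hz2
        exact mul_self_eq_zero.mp h'
      exact hsne (by rw [hz0, hz3, add_zero])
  · rintro ⟨i, j, hij, hi, hj⟩ A
    obtain ⟨X, Y, hXY⟩ := Lmain hi hj A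
    refine ⟨fun k => if k = i then X else if k = j then Y else 0, ?_⟩
    have hterm : ∀ k, a k • (if k = i then X else if k = j then Y else 0) ^ 2
        = (if k = i then a i • X ^ 2 else 0) + (if k = j then a j • Y ^ 2 else 0) := by
      intro k
      by_cases h1 : k = i
      · subst h1
        rw [if_pos rfl, if_pos rfl, if_neg hij, add_zero]
      · rw [if_neg h1, if_neg h1]
        by_cases h3 : k = j
        · subst h3
          rw [if_pos rfl, if_pos rfl, zero_add]
        · rw [if_neg h3, if_neg h3]
          simp [pow_two]
    calc ∑ k, a k • (if k = i then X else if k = j then Y else 0) ^ 2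
        = ∑ k, ((if k = i then a i • X ^ 2 else 0) + (if k = j then a j • Y ^ 2 else 0)) := by
          exact Finset.sum_congr rfl fun k _ => hterm k
      _ = a i • X ^ 2 + a j • Y ^ 2 := by
          rw [Finset.sum_add_distrib, Finset.sum_ite_eq' Finset.univ i, Finset.sum_ite_eq' Finset.univ j]
          simp
      _ = A := hXY
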